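/- There do not exist five distinct vertices a, b, c, d, e ∈ V such that φ(ab) = φ(be), φ(bc) = φ(ac), φ(cd) = φ(bd), φ(de) = φ(ce), and φ(ae) = φ(ad), where φ is the Modified CFLS coloring. -/
import Mathlib


namespace CFLS

/-- A vertex of `K_n` for `n = 2^(m^2)`: `m` blocks, each a string of `m` bits.
`x k` is the `k`-th block `x^(k+1)`, and `x k j` is its `j`-th bit (most significant first). -/
abbrev Vtx (m : ℕ) := Fin m → Fin m → Bool

/-- The `j`-th bit of a bit string (as a total function of `j : ℕ`). -/
def bitAt {N : ℕ} (f : Fin N → Bool) (j : ℕ) : Bool :=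
  if h : j < N then f ⟨j, h⟩ else false

/-- The value of a bit string read as a binary integer, most significant bit first. -/
def strToNat {N : ℕ} (f : Fin N → Bool) : ℕ :=
  ∑ j : Fin N, if f j then 2 ^ (N - 1 - j.val) else 0

/-- The `k`-th block of a vertex (as a total function of `k : ℕ`). -/
def blockAt {m : ℕ} (x : Vtx m) (k : ℕ) : Fin m → Bool :=
  if h : k < m then x ⟨k, h⟩ else fun _ => false

/-- The least block index at which `x` and `y` differ. -/
noncomputable def firstDiffBlock {m : ℕ} (x y : Vtx m) : ℕ :=
  sInf {k | blockAt x k ≠ blockAt y k}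

/-- The position (1-indexed) of the first bit at which two bit strings differ; `0` if equal. -/
noncomputable def firstDiffIdx {N : ℕ} (f g : Fin N → Bool) : ℕ :=
  if f = g then 0 else sInf {j | bitAt f j ≠ bitAt g j} + 1

/-- The value of a vertex read as a binary integer (concatenation of its blocks). -/
def vtxToNat {m : ℕ} (x : Vtx m) : ℕ :=
  ∑ k : Fin m, strToNat (x k) * (2 ^ m) ^ (m - 1 - k.val)

/-- The colors of the Modified CFLS coloring:
`((i, {x^(i), y^(i)}), i_1, …, i_m, δ_1, …, δ_m)`. -/
abbrev Color (m : ℕ) := (ℕ × Set (Fin m → Bool)) × (Fin m → ℕ) × (Fin m → ℤ)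

/-- The Modified CFLS color of the edge `xy` assuming `x ≤ y` as binary integers. -/
noncomputable def phiAux {m : ℕ} (x y : Vtx m) : Color m :=
  ((firstDiffBlock x y,
      {blockAt x (firstDiffBlock x y), blockAt y (firstDiffBlock x y)}),
   fun k => firstDiffIdx (x k) (y k),
   fun k => if strToNat (x k) ≤ strToNat (y k) then (1 : ℤ) else -1)

/-- The Modified CFLS coloring `φ`. -/
noncomputable def phi {m : ℕ} (x y : Vtx m) : Color m :=
  if vtxToNat x ≤ vtxToNat y then phiAux x y else phiAux y x

/-- The ten edges among five vertices. -/
def edgeList {m : ℕ} (a b c d e : Vtx m) : List (Vtx m × Vtx m) :=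
  [(a,b),(a,c),(a,d),(a,e),(b,c),(b,d),(b,e),(c,d),(c,e),(d,e)]

/-- The number of the ten edges among `a,b,c,d,e` receiving color `col` under `φ`. -/
noncomputable def colorCount {m : ℕ} (a b c d e : Vtx m) (col : Color m) : ℕ :=
  ((edgeList a b c d e).map fun p => phi p.1 p.2).countP fun x =>
    @decide (x = col) (Classical.propDecidable _)

/-- Five pairwise distinct vertices. -/
def Distinct5 {m : ℕ} (a b c d e : Vtx m) : Prop :=
  a ≠ b ∧ a ≠ c ∧ a ≠ d ∧ a ≠ e ∧ b ≠ c ∧ b ≠ d ∧ b ≠ e ∧ c ≠ d ∧ c ≠ e ∧ d ≠ e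

/-- `col` appears on some edge among `a,b,c,d,e`. -/
noncomputable def IsAttained {m : ℕ} (a b c d e : Vtx m) (col : Color m) : Prop :=
  colorCount a b c d e col ≠ 0

/-- A 2-2-2-2-2 configuration: five distinct vertices such that `φ` on the ten edges
among them takes exactly five values, each attained on exactly two edges. -/
def IsConfig22222 {m : ℕ} (a b c d e : Vtx m) : Prop :=
  Distinct5 a b c d e ∧
  ∀ col : Color m, colorCount a b c d e col = 0 ∨ colorCount a b c d e col = 2

/-- The color class of `col` is a matching: two vertex-disjoint edges of color `col`. -/
def IsMatchingClass {m : ℕ} (a b c d e : Vtx m) (col : Color m) : Prop :=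
  ∃ p ∈ edgeList a b c d e, ∃ q ∈ edgeList a b c d e,
    phi p.1 p.2 = col ∧ phi q.1 q.2 = col ∧
    p.1 ≠ q.1 ∧ p.1 ≠ q.2 ∧ p.2 ≠ q.1 ∧ p.2 ≠ q.2

/-- The color class of `col` is a path: two distinct edges of color `col` sharing a vertex. -/
def IsPathClass {m : ℕ} (a b c d e : Vtx m) (col : Color m) : Prop :=
  ∃ p ∈ edgeList a b c d e, ∃ q ∈ edgeList a b c d e,
    p ≠ q ∧ phi p.1 p.2 = col ∧ phi q.1 q.2 = col ∧
    (p.1 = q.1 ∨ p.1 = q.2 ∨ p.2 = q.1 ∨ p.2 = q.2)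


lemma exists_blockAt_ne {m : ℕ} {x y : Vtx m} (h : x ≠ y) :
    ∃ k, blockAt x k ≠ blockAt y k := by
  by_contra hc
  push_neg at hc
  apply h
  funext k
  have := hc k.val
  simpa [blockAt] using this

lemma firstDiffBlock_comm {m : ℕ} (x y : Vtx m) :
    firstDiffBlock x y = firstDiffBlock y x := by
  unfold firstDiffBlock
  congr 1
  ext k
  simp [ne_comm]

lemma firstDiffBlock_mem {m : ℕ} {x y : Vtx m} (h : x ≠ y) :
    blockAt x (firstDiffBlock x y) ≠ blockAt y (firstDiffBlock x y) :=
  Nat.sInf_mem (exists_blockAt_ne h)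

lemma firstDiffBlock_le {m : ℕ} {x y : Vtx m} {k : ℕ}
    (h : blockAt x k ≠ blockAt y k) : firstDiffBlock x y ≤ k :=
  Nat.sInf_le h

lemma phi_fst {m : ℕ} (x y : Vtx m) :
    (phi x y).1 = (firstDiffBlock x y,
      {blockAt x (firstDiffBlock x y), blockAt y (firstDiffBlock x y)}) := by
  unfold phi phiAux
  split_ifs with h
  · rfl
  · simp only
    rw [firstDiffBlock_comm y x, Set.pair_comm]

/-- Core narrowness lemma: on a monochromatic path `x – y – z` (matching first
components of the color), the endpoints `x, z` first differ at a strictly later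
block than `x, y` do. -/
lemma key {m : ℕ} {x y z : Vtx m} (hxy : x ≠ y) (hyz : y ≠ z) (hxz : x ≠ z)
    (h1 : firstDiffBlock x y = firstDiffBlock y z)
    (h2 : ({blockAt x (firstDiffBlock x y), blockAt y (firstDiffBlock x y)} :
        Set (Fin m → Bool))
        = {blockAt y (firstDiffBlock x y), blockAt z (firstDiffBlock x y)}) :
    firstDiffBlock x y < firstDiffBlock x z := by
  set i := firstDiffBlock x y with hi
  have hxyi : blockAt x i ≠ blockAt y i := firstDiffBlock_mem hxy
  have hyzi : blockAt y i ≠ blockAt z i := by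
    rw [h1]; exact firstDiffBlock_mem hyz
  have hxzi : blockAt x i = blockAt z i := by
    have hx : blockAt x i ∈ ({blockAt y i, blockAt z i} : Set (Fin m → Bool)) := by
      rw [← h2]; exact Set.mem_insert _ _
    rcases hx with h | h
    · exact absurd h hxyi
    · exact h
  have hlt : ∀ k < i, blockAt x k = blockAt z k := by
    intro k hk
    have e1 : blockAt x k = blockAt y k := by
      by_contra hne
      have := firstDiffBlock_le hne
      omega
    have e2 : blockAt y k = blockAt z k := by
      by_contra hne
      have := firstDiffBlock_le hne
      omega
    rw [e1, e2]
  have hmem : blockAt x (firstDiffBlock x z) ≠ blockAt z (firstDiffBlock x z) :=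
    firstDiffBlock_mem hxz
  by_contra hle
  push_neg at hle
  rcases lt_or_eq_of_le hle with h | h
  · exact hmem (hlt _ h)
  · rw [h] at hmem; exact hmem hxzi

/-- Path with edges written `(x,y)`, `(y,z)`. -/
lemma key1 {m : ℕ} {x y z : Vtx m} (hxy : x ≠ y) (hyz : y ≠ z) (hxz : x ≠ z)
    (h : phi x y = phi y z) : firstDiffBlock x y < firstDiffBlock x z := by
  have H := congrArg Prod.fst h
  rw [phi_fst, phi_fst] at H
  have e1 : firstDiffBlock x y = firstDiffBlock y z := congrArg Prod.fst H
  have s1 := congrArg Prod.snd H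
  simp only at s1 e1
  rw [← e1] at s1
  exact key hxy hyz hxz e1 s1

/-- Path with edges written `(x,y)`, `(z,y)`. -/
lemma key2 {m : ℕ} {x y z : Vtx m} (hxy : x ≠ y) (hyz : y ≠ z) (hxz : x ≠ z)
    (h : phi x y = phi z y) : firstDiffBlock x y < firstDiffBlock x z := by
  have H := congrArg Prod.fst h
  rw [phi_fst, phi_fst] at H
  have e1 : firstDiffBlock x y = firstDiffBlock z y := congrArg Prod.fst H
  have s1 := congrArg Prod.snd H
  simp only at s1 e1
  rw [← e1] at s1
  rw [firstDiffBlock_comm z y] at e1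
  rw [Set.pair_comm (blockAt z (firstDiffBlock x y))] at s1
  exact key hxy hyz hxz e1 s1

/-- Path with edges written `(y,x)`, `(y,z)`. -/
lemma key3 {m : ℕ} {x y z : Vtx m} (hxy : x ≠ y) (hyz : y ≠ z) (hxz : x ≠ z)
    (h : phi y x = phi y z) : firstDiffBlock x y < firstDiffBlock x z := by
  have H := congrArg Prod.fst h
  rw [phi_fst, phi_fst] at H
  have e1 : firstDiffBlock y x = firstDiffBlock y z := congrArg Prod.fst H
  have s1 := congrArg Prod.snd H
  simp only at s1 e1
  rw [firstDiffBlock_comm y x] at e1 s1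
  rw [← e1] at s1
  rw [Set.pair_comm (blockAt y (firstDiffBlock x y))] at s1
  exact key hxy hyz hxz e1 s1

/-- The configuration of Figure (E) (rotated narrow paths) is forbidden under the
Modified CFLS coloring. -/
theorem no_rotated_narrow_paths (m : ℕ) (hm : 0 < m) :
    ¬ ∃ a b c d e : Vtx m, Distinct5 a b c d e ∧
      phi a b = phi b e ∧ phi b c = phi a c ∧ phi c d = phi b d ∧
      phi d e = phi c e ∧ phi a e = phi a d := by
  rintro ⟨a, b, c, d, e, ⟨hab, hac, had, hae, hbc, hbd, hbe, hcd, hce, hde⟩,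
    h1, h2, h3, h4, h5⟩
  have k1 : firstDiffBlock a b < firstDiffBlock a e := key1 hab hbe hae h1
  have k2 : firstDiffBlock b c < firstDiffBlock b a := key2 hbc hac.symm hab.symm h2
  have k3 : firstDiffBlock c d < firstDiffBlock c b := key2 hcd hbd.symm hbc.symm h3
  have k4 : firstDiffBlock d e < firstDiffBlock d c := key2 hde hce.symm hcd.symm h4
  have k5 : firstDiffBlock e a < firstDiffBlock e d := key3 hae.symm had hde.symm h5
  have c1 := firstDiffBlock_comm a b
  have c2 := firstDiffBlock_comm b c
  have c3 := firstDiffBlock_comm c d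
  have c4 := firstDiffBlock_comm d e
  have c5 := firstDiffBlock_comm a e
  omega

end CFLS
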